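/- Let 0 < M < 1 and 0 < w < (1-M)/4. Define h(x) = ((1+M)/2)·ln((1+x)² + w²) + ((1-M)/2)·ln((1-x)² + w²). Then h'(x) = 2u(x)/(((1+x)²+w²)((1-x)²+w²)), where u(x) = x³ - Mx² - (1-w²)x + M(1+w²), and u has exactly three real zeros: one in (-1, -M), one in (M, M + w/2), and one in (1 - w/2, 1). -/

import Mathlib

/-- For `0 < M < 1`, `0 < w < (1-M)/4`, the function
`h(x) = ((1+M)/2) ln((1+x)² + w²) + ((1-M)/2) ln((1-x)² + w²)` has derivative
`h'(x) = 2u(x)/(((1+x)²+w²)((1-x)²+w²))` with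
`u(x) = x³ - Mx² - (1-w²)x + M(1+w²)`, and `u` has exactly three real zeros:
one in `(-1, -M)`, one in `(M, M + w/2)`, and one in `(1 - w/2, 1)`. -/
theorem stmt_8 (M w : ℝ) (hM : M ∈ Set.Ioo (0 : ℝ) 1) (hw : 0 < w) (hw4 : w < (1 - M) / 4)
    (h u : ℝ → ℝ)
    (hh : ∀ x : ℝ, h x = (1 + M) / 2 * Real.log ((1 + x) ^ 2 + w ^ 2)
        + (1 - M) / 2 * Real.log ((1 - x) ^ 2 + w ^ 2))
    (hu : ∀ x : ℝ, u x = x ^ 3 - M * x ^ 2 - (1 - w ^ 2) * x + M * (1 + w ^ 2)) :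
    (∀ x : ℝ, HasDerivAt h (2 * u x / (((1 + x) ^ 2 + w ^ 2) * ((1 - x) ^ 2 + w ^ 2))) x) ∧
    ∃ x₁ ∈ Set.Ioo (-1 : ℝ) (-M), ∃ x₂ ∈ Set.Ioo M (M + w / 2),
      ∃ x₃ ∈ Set.Ioo (1 - w / 2) 1,
        ∀ x : ℝ, u x = 0 ↔ (x = x₁ ∨ x = x₂ ∨ x = x₃) := by
  obtain ⟨hM0, hM1⟩ := hM
  have hwp : 0 < w := hw
  have hheq : h = fun x => (1 + M) / 2 * Real.log ((1 + x) ^ 2 + w ^ 2)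
      + (1 - M) / 2 * Real.log ((1 - x) ^ 2 + w ^ 2) := funext hh
  have hueq : u = fun x => x ^ 3 - M * x ^ 2 - (1 - w ^ 2) * x + M * (1 + w ^ 2) := funext hu
  have hd1 : ∀ x : ℝ, 0 < (1 + x) ^ 2 + w ^ 2 := fun x => by positivity
  have hd2 : ∀ x : ℝ, 0 < (1 - x) ^ 2 + w ^ 2 := fun x => by positivity
  constructor
  · intro x
    have A : HasDerivAt (fun x : ℝ => (1 + x) ^ 2 + w ^ 2) (2 * (1 + x)) x := by
      have := (((hasDerivAt_id x).const_add 1).pow 2).add_const (w ^ 2)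
      simpa using this
    have B : HasDerivAt (fun x : ℝ => (1 - x) ^ 2 + w ^ 2) (-(2 * (1 - x))) x := by
      have := (((hasDerivAt_id x).const_sub 1).pow 2).add_const (w ^ 2)
      simpa using this
    have A' := (A.log (ne_of_gt (hd1 x))).const_mul ((1 + M) / 2)
    have B' := (B.log (ne_of_gt (hd2 x))).const_mul ((1 - M) / 2)
    have C := A'.add B'
    rw [hheq]
    refine C.congr_deriv ?_
    rw [hu x]
    field_simp
    ring
  · -- sign values
    have hcont : Continuous u := by rw [hueq]; continuity
    have s1 : u (-1) < 0 := by rw [hu]; nlinarith [sq_nonneg w, mul_pos hwp hwp]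
    have s2 : 0 < u (-M) := by rw [hu]; nlinarith [mul_pos hM0 hM0]
    have s3 : 0 < u M := by rw [hu]; nlinarith [mul_pos hM0 (mul_pos hwp hwp)]
    have s4 : u (M + w / 2) < 0 := by
      rw [hu]; nlinarith [mul_pos hwp hwp, mul_pos hM0 hwp, sq_nonneg (M + w), mul_pos (mul_pos hwp hwp) hwp]
    have s5 : u (1 - w / 2) < 0 := by
      rw [hu]; nlinarith [mul_pos hwp hwp, mul_pos (mul_pos hwp hwp) hwp]
    have s6 : 0 < u 1 := by rw [hu]; nlinarith [mul_pos hM0 (mul_pos hwp hwp)]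
    have I1 : (0:ℝ) ∈ u '' Set.Ioo (-1) (-M) := by
      apply intermediate_value_Ioo (by linarith) hcont.continuousOn
      exact ⟨s1, s2⟩
    have I2 : (0:ℝ) ∈ u '' Set.Ioo M (M + w / 2) := by
      apply intermediate_value_Ioo' (by linarith) hcont.continuousOn
      exact ⟨s4, s3⟩
    have I3 : (0:ℝ) ∈ u '' Set.Ioo (1 - w / 2) 1 := by
      apply intermediate_value_Ioo (by linarith) hcont.continuousOn
      exact ⟨s5, s6⟩
    obtain ⟨x₁, hx₁, r1⟩ := I1
    obtain ⟨x₂, hx₂, r2⟩ := I2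
    obtain ⟨x₃, hx₃, r3⟩ := I3
    refine ⟨x₁, hx₁, x₂, hx₂, x₃, hx₃, ?_⟩
    obtain ⟨hx₁l, hx₁r⟩ := hx₁
    obtain ⟨hx₂l, hx₂r⟩ := hx₂
    obtain ⟨hx₃l, hx₃r⟩ := hx₃
    have h12 : x₁ ≠ x₂ := by intro e; rw [e] at hx₁r; linarith
    have h13 : x₁ ≠ x₃ := by intro e; rw [e] at hx₁r; linarith
    have h23 : x₂ ≠ x₃ := by intro e; rw [e] at hx₂r; linarith
    have e1' : u x₁ = 0 := r1
    have e2' : u x₂ = 0 := r2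
    have e3' : u x₃ = 0 := r3
    rw [hu] at e1' e2' e3'
    have d12 : x₁ ^ 2 + x₁ * x₂ + x₂ ^ 2 - M * (x₁ + x₂) - (1 - w ^ 2) = 0 := by
      have key : (x₁ - x₂) * (x₁ ^ 2 + x₁ * x₂ + x₂ ^ 2 - M * (x₁ + x₂) - (1 - w ^ 2)) = 0 := by
        linear_combination e1' - e2'
      rcases mul_eq_zero.mp key with hk | hk
      · exact absurd (sub_eq_zero.mp hk) h12
      · exact hk
    have d13 : x₁ ^ 2 + x₁ * x₃ + x₃ ^ 2 - M * (x₁ + x₃) - (1 - w ^ 2) = 0 := by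
      have key : (x₁ - x₃) * (x₁ ^ 2 + x₁ * x₃ + x₃ ^ 2 - M * (x₁ + x₃) - (1 - w ^ 2)) = 0 := by
        linear_combination e1' - e3'
      rcases mul_eq_zero.mp key with hk | hk
      · exact absurd (sub_eq_zero.mp hk) h13
      · exact hk
    have e1 : x₁ + x₂ + x₃ = M := by
      have key : (x₂ - x₃) * (x₁ + x₂ + x₃ - M) = 0 := by
        linear_combination d12 - d13
      rcases mul_eq_zero.mp key with hk | hk
      · exact absurd (sub_eq_zero.mp hk) h23
      · linarith [sub_eq_zero.mp hk]
    have e2 : x₁ * x₂ + x₁ * x₃ + x₂ * x₃ = -(1 - w ^ 2) := by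
      linear_combination -d12 + (x₁ + x₂) * e1
    have e3 : x₁ * x₂ * x₃ = -(M * (1 + w ^ 2)) := by
      linear_combination e1' - x₁ ^ 2 * e1 + x₁ * e2
    intro x
    rw [hu]
    have fact : x ^ 3 - M * x ^ 2 - (1 - w ^ 2) * x + M * (1 + w ^ 2)
        = (x - x₁) * ((x - x₂) * (x - x₃)) := by
      linear_combination x ^ 2 * e1 - x * e2 + e3
    rw [fact]
    constructor
    · intro hz
      rcases mul_eq_zero.mp hz with hk | hk
      · exact Or.inl (sub_eq_zero.mp hk)
      · rcases mul_eq_zero.mp hk with hk2 | hk2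
        · exact Or.inr (Or.inl (sub_eq_zero.mp hk2))
        · exact Or.inr (Or.inr (sub_eq_zero.mp hk2))
    · rintro (rfl | rfl | rfl) <;> ring
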